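/- For every n ≥ 1 and every z ∈ ℂ^{n+1} with ρ(z) = 0, the real Fréchet derivative of ρ : ℂ^{n+1} → ℝ at z is nonzero; that is, dρ ≠ 0 on the boundary ∂Ω of the domain Ω = {ρ < 0}, so ∂Ω is a smooth hypersurface. -/

import Mathlib

open Complex

/-- `ρ(z) := 4|1 − z₁z₂|² + ‖z‖² − 3` on `ℂ^{n+1}`, regarded as a smooth real-valued
function on `ℂ^{n+1}` viewed as a real normed space. -/
noncomputable def rho (n : ℕ) (z : Fin (n + 1) → ℂ) : ℝ :=
  4 * Complex.normSq (1 - z 0 * z 1) + (∑ j : Fin (n + 1), Complex.normSq (z j)) - 3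

set_option maxHeartbeats 1000000 in
/-- For every `n ≥ 1` and every `z ∈ ℂ^{n+1}` with `ρ(z) = 0`, the real Fréchet
derivative of `ρ` at `z` is nonzero; that is, `dρ ≠ 0` on the boundary `∂Ω` of the
domain `Ω = {ρ < 0}`, so `∂Ω` is a smooth hypersurface. -/
theorem stmt17 (n : ℕ) (hn : 1 ≤ n) (z : Fin (n + 1) → ℂ) (hz : rho n z = 0) :
    fderiv ℝ (rho n) z ≠ 0 := by
  intro hD0
  have h01 : (0 : Fin (n + 1)) ≠ 1 := by
    intro h
    have h2 := congrArg Fin.val h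
    rw [Fin.val_zero, Fin.val_one', Nat.mod_eq_of_lt (by omega)] at h2
    exact absurd h2 (by omega)
  set W : ℂ := 1 - z 0 * z 1 with hWdef
  -- the derivative of rho at z
  have hp0 : HasFDerivAt (fun z : Fin (n + 1) → ℂ => z 0)
      (ContinuousLinearMap.proj (R := ℝ) 0) z := hasFDerivAt_apply 0 z
  have hp1 : HasFDerivAt (fun z : Fin (n + 1) → ℂ => z 1)
      (ContinuousLinearMap.proj (R := ℝ) 1) z := hasFDerivAt_apply 1 z
  have hmul := hp0.mul hp1
  have hW : HasFDerivAt (fun z : Fin (n + 1) → ℂ => (1 : ℂ) - z 0 * z 1)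
      (-(z 0 • ContinuousLinearMap.proj (R := ℝ) 1
          + z 1 • ContinuousLinearMap.proj (R := ℝ) 0)) z := hmul.const_sub 1
  have hnsq := hW.norm_sq
  have hsum : HasFDerivAt (fun z : Fin (n + 1) → ℂ => ∑ j, ‖z j‖ ^ 2)
      (∑ j : Fin (n + 1), (2 • (innerSL ℝ (z j)).comp (ContinuousLinearMap.proj (R := ℝ) j))) z :=
    HasFDerivAt.fun_sum (fun j _ => (hasFDerivAt_apply j z).norm_sq)
  have hrho : HasFDerivAt (rho n)
      ((4 : ℝ) • (2 • (innerSL ℝ W).comp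
          (-(z 0 • ContinuousLinearMap.proj (R := ℝ) 1
            + z 1 • ContinuousLinearMap.proj (R := ℝ) 0)))
        + ∑ j : Fin (n + 1), (2 • (innerSL ℝ (z j)).comp (ContinuousLinearMap.proj (R := ℝ) j)))
      z := by
    have h := ((hnsq.const_mul (4 : ℝ)).add hsum).sub_const 3
    have hfun : rho n = fun z : Fin (n + 1) → ℂ =>
        4 * ‖(1 : ℂ) - z 0 * z 1‖ ^ 2 + (∑ j, ‖z j‖ ^ 2) - 3 := by
      funext y
      simp [rho, Complex.sq_norm]
    rw [hfun]
    exact h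
  have hDzero := hrho.fderiv.symm.trans hD0
  -- evaluate the derivative at arbitrary directions
  have key : ∀ v : Fin (n + 1) → ℂ,
      4 * (2 * ((starRingEnd ℂ) W * -(z 0 * v 1 + z 1 * v 0)).re)
        + ∑ j, 2 * ((starRingEnd ℂ) (z j) * v j).re = 0 := by
    intro v
    have h := congrFun (congrArg DFunLike.coe hDzero) v
    simp only [ContinuousLinearMap.add_apply, ContinuousLinearMap.smul_apply,
      ContinuousLinearMap.coe_sum', Finset.sum_apply, ContinuousLinearMap.comp_apply,
      ContinuousLinearMap.neg_apply, ContinuousLinearMap.proj_apply, innerSL_apply_apply,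
      Complex.inner, ContinuousLinearMap.zero_apply, smul_eq_mul, nsmul_eq_mul,
      Nat.cast_ofNat, Complex.neg_re] at h
    simpa only [mul_comm] using h
  have sum_single : ∀ (i : Fin (n + 1)) (w : ℂ),
      (∑ j, 2 * ((starRingEnd ℂ) (z j) * ((Pi.single i w : Fin (n + 1) → ℂ) j)).re)
        = 2 * ((starRingEnd ℂ) (z i) * w).re := by
    intro i w
    rw [Finset.sum_eq_single i]
    · rw [Pi.single_eq_same]
    · intro j _ hj
      rw [Pi.single_eq_of_ne hj]
      simp
    · simp
  -- coordinates j ≥ 2 vanish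
  have hz2 : ∀ j : Fin (n + 1), j ≠ 0 → j ≠ 1 → z j = 0 := by
    intro j hj0 hj1
    have h := key (Pi.single j (z j))
    rw [sum_single] at h
    rw [Pi.single_eq_of_ne (Ne.symm hj0), Pi.single_eq_of_ne (Ne.symm hj1)] at h
    simp only [mul_zero, zero_mul, add_zero, zero_add, neg_zero, Complex.zero_re] at h
    have h2 : ((starRingEnd ℂ) (z j) * z j).re = 0 := by linarith
    rw [Complex.normSq_eq_conj_mul_self.symm] at h2
    exact Complex.normSq_eq_zero.mp h2
  -- gradient equations in coordinates 0 and 1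
  have e0 : ∀ w : ℂ, ((2 * (starRingEnd ℂ) (z 0) - 8 * z 1 * (starRingEnd ℂ) W) * w).re = 0 := by
    intro w
    have h := key (Pi.single 0 w)
    rw [sum_single] at h
    rw [Pi.single_eq_same, Pi.single_eq_of_ne h01.symm] at h
    simp only [hWdef, Complex.mul_re, Complex.mul_im, Complex.sub_re, Complex.sub_im,
      Complex.neg_re, Complex.neg_im, Complex.add_re, Complex.add_im, Complex.conj_re,
      Complex.conj_im, Complex.one_re, Complex.one_im, Complex.re_ofNat, Complex.im_ofNat,
      Complex.zero_re, Complex.zero_im, mul_zero, zero_mul, zero_add, add_zero, sub_zero,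
      zero_sub, neg_zero, neg_neg] at h ⊢
    linear_combination h
  have e1 : ∀ w : ℂ, ((2 * (starRingEnd ℂ) (z 1) - 8 * z 0 * (starRingEnd ℂ) W) * w).re = 0 := by
    intro w
    have h := key (Pi.single 1 w)
    rw [sum_single] at h
    rw [Pi.single_eq_same, Pi.single_eq_of_ne h01] at h
    simp only [hWdef, Complex.mul_re, Complex.mul_im, Complex.sub_re, Complex.sub_im,
      Complex.neg_re, Complex.neg_im, Complex.add_re, Complex.add_im, Complex.conj_re,
      Complex.conj_im, Complex.one_re, Complex.one_im, Complex.re_ofNat, Complex.im_ofNat,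
      Complex.zero_re, Complex.zero_im, mul_zero, zero_mul, zero_add, add_zero, sub_zero,
      zero_sub, neg_zero, neg_neg] at h ⊢
    linear_combination h
  have hc0 : 2 * (starRingEnd ℂ) (z 0) - 8 * z 1 * (starRingEnd ℂ) W = 0 := by
    have h := e0 ((starRingEnd ℂ) (2 * (starRingEnd ℂ) (z 0) - 8 * z 1 * (starRingEnd ℂ) W))
    rw [Complex.mul_conj] at h
    rw [Complex.ofReal_re] at h
    exact Complex.normSq_eq_zero.mp h
  have hc1 : 2 * (starRingEnd ℂ) (z 1) - 8 * z 0 * (starRingEnd ℂ) W = 0 := by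
    have h := e1 ((starRingEnd ℂ) (2 * (starRingEnd ℂ) (z 1) - 8 * z 0 * (starRingEnd ℂ) W))
    rw [Complex.mul_conj] at h
    rw [Complex.ofReal_re] at h
    exact Complex.normSq_eq_zero.mp h
  -- norms
  set a : ℝ := Complex.normSq (z 0) with ha
  set b : ℝ := Complex.normSq (z 1) with hb
  set wq : ℝ := Complex.normSq W with hwq
  have E1 : 2 * 2 * a = 8 * 8 * b * wq := by
    have h : 2 * (starRingEnd ℂ) (z 0) = 8 * z 1 * (starRingEnd ℂ) W := by
      linear_combination hc0
    have := congrArg Complex.normSq h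
    simpa [Complex.normSq_mul, Complex.normSq_conj, ha, hb, hwq] using this
  have E2 : 2 * 2 * b = 8 * 8 * a * wq := by
    have h : 2 * (starRingEnd ℂ) (z 1) = 8 * z 0 * (starRingEnd ℂ) W := by
      linear_combination hc1
    have := congrArg Complex.normSq h
    simpa [Complex.normSq_mul, Complex.normSq_conj, ha, hb, hwq] using this
  have hzsum : (∑ j : Fin (n + 1), Complex.normSq (z j)) = a + b := by
    rw [← Finset.sum_subset (Finset.subset_univ ({0, 1} : Finset (Fin (n + 1))))]
    · rw [Finset.sum_pair h01]
    · intro x _ hx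
      simp only [Finset.mem_insert, Finset.mem_singleton, not_or] at hx
      rw [hz2 x hx.1 hx.2, Complex.normSq_zero]
  have hzval : 4 * wq + (a + b) - 3 = 0 := by
    rw [rho, hzsum] at hz
    exact hz
  clear hp0 hp1 hmul hW hnsq hsum hrho hDzero key sum_single e0 e1 hc0 hc1 hD0
  have ha0 : 0 ≤ a := Complex.normSq_nonneg _
  have hb0 : 0 ≤ b := Complex.normSq_nonneg _
  have hwq0 : 0 ≤ wq := Complex.normSq_nonneg _
  by_cases hab : a + b = 0
  · -- z 0 = z 1 = 0, so W = 1 and rho z = 1 ≠ 0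
    have haz : a = 0 := by linarith
    have hz0 : z 0 = 0 := Complex.normSq_eq_zero.mp haz
    have hW1 : W = 1 := by rw [hWdef, hz0]; ring
    have : wq = 1 := by rw [hwq, hW1, Complex.normSq_one]
    linarith
  · -- |W| = 1/4, a = b = 11/8, contradiction with triangle inequality
    have habpos : 0 < a + b := lt_of_le_of_ne (by linarith) (Ne.symm hab)
    have hwq16 : wq = 1 / 16 := by
      have h64 : 4 * (a + b) = 64 * wq * (a + b) := by linarith
      have h2 : (4 - 64 * wq) * (a + b) = 0 := by linear_combination h64
      rcases mul_eq_zero.mp h2 with h | h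
      · linarith
      · exact absurd h hab
    have haeqb : a = b := by
      rw [hwq16] at E1
      linarith
    have ha118 : a = 11 / 8 := by
      rw [hwq16] at hzval
      linarith
    -- triangle inequality: ‖z0 z1‖ ≤ 1 + ‖W‖
    have hWnorm : ‖W‖ = 1 / 4 := by
      have h1 : ‖W‖ ^ 2 = wq := by
        rw [hwq, ← Complex.sq_norm]
      have h2 : (‖W‖ - 1 / 4) * (‖W‖ + 1 / 4) = 0 := by
        rw [hwq16] at h1
        linear_combination h1
      rcases mul_eq_zero.mp h2 with h | h
      · linarith
      · linarith [norm_nonneg W]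
    have hpnorm : ‖z 0 * z 1‖ ^ 2 = 121 / 64 := by
      rw [Complex.sq_norm, Complex.normSq_mul, ← ha, ← hb, ha118, ← haeqb,
        ha118]
      norm_num
    have htri : ‖z 0 * z 1‖ ≤ 1 + ‖W‖ := by
      have : z 0 * z 1 = 1 - W := by rw [hWdef]; ring
      rw [this]
      calc ‖(1 : ℂ) - W‖ ≤ ‖(1 : ℂ)‖ + ‖W‖ := norm_sub_le _ _
        _ = 1 + ‖W‖ := by rw [norm_one]
    rw [hWnorm] at htri
    nlinarith [norm_nonneg (z 0 * z 1)]
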